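/- Let K be a finite abstract simplicial complex triangulating the d-simplex Δ^d with boundary vertices v₁,…,v_{d+1}, and let G_K be Gallai's graph: vertices are the vertices of K, a vertex v_ρ for each facet ρ of K, and a vertex w_σ for each facet σ of Δ^d; edges join u to v_ρ when u ∈ ρ, u to w_σ when u lies in σ, and all pairs w_σ w_τ. Then G_K admits no proper (d+1)-colouring if and only if every Sperner labelling of K has a rainbow facet. -/

import Mathlib

open Geometry

/-- A (finite) triangulation of the `d`-simplex: a finite geometric simplicial
complex in `ℝ^d` whose underlying space is the convex hull of `d+1` affinely
independent points (the corners of `Δ^d`). -/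
structure SimplexTriangulation (d : ℕ) where
  K : Geometry.SimplicialComplex ℝ (EuclideanSpace ℝ (Fin d))
  corner : Fin (d + 1) → EuclideanSpace ℝ (Fin d)
  indep : AffineIndependent ℝ corner
  finite : K.faces.Finite
  space_eq : K.space = convexHull ℝ (Set.range corner)

namespace SimplexTriangulation

variable {d : ℕ}

/-- Facets of the triangulation: faces with `d+1` vertices (i.e. `d`-simplices). -/
def IsFacet (T : SimplexTriangulation d) (σ : Finset (EuclideanSpace ℝ (Fin d))) : Prop :=
  σ ∈ T.K.faces ∧ σ.card = d + 1

/-- A Sperner labelling: each corner `vᵢ` of `Δ^d` gets label `i`, and any vertex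
of the triangulation lying in a face of `Δ^d` (the convex hull of a set of
corners) gets the label of one of the corners of that face. -/
def IsSperner (T : SimplexTriangulation d)
    (l : EuclideanSpace ℝ (Fin d) → Fin (d + 1)) : Prop :=
  (∀ i, l (T.corner i) = i) ∧
  ∀ x ∈ T.K.vertices, ∀ s : Set (Fin (d + 1)),
    x ∈ convexHull ℝ (T.corner '' s) → ∃ i ∈ s, l x = i

end SimplexTriangulation

/-- A simplex is rainbow when the labelling is injective on its vertices. -/
def Rainbow {α : Type*} {m : ℕ} (l : α → Fin m) (σ : Finset α) : Prop :=
  Set.InjOn l ↑σ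

namespace SimplexTriangulation

variable {d : ℕ}

/-- Vertices of Gallai's graph `G_K`: (V1) vertices of `K`, (V2) a vertex `v_ρ`
for each facet `ρ` of `K`, (V3) a vertex `w_σ` for each of the `d+1` facets of
`Δ^d` (indexed by the opposite corner). -/
def GallaiVertex (T : SimplexTriangulation d) : Type :=
  ↥T.K.vertices ⊕ {σ // T.IsFacet σ} ⊕ Fin (d + 1)

/-- The generating relation of Gallai's graph: `u ∼ v_ρ` when `u ∈ ρ`;
`u ∼ w_j` when `u` lies in the facet of `Δ^d` opposite to corner `j`;
and all pairs of type-(V3) vertices are adjacent. -/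
def gallaiRel (T : SimplexTriangulation d) :
    T.GallaiVertex → T.GallaiVertex → Prop
  | Sum.inl u, Sum.inr (Sum.inl ρ) => (u : EuclideanSpace ℝ (Fin d)) ∈ ρ.1
  | Sum.inl u, Sum.inr (Sum.inr j) =>
      (u : EuclideanSpace ℝ (Fin d)) ∈ convexHull ℝ (T.corner '' {i | i ≠ j})
  | Sum.inr (Sum.inr _), Sum.inr (Sum.inr _) => True
  | _, _ => False

/-- Gallai's graph `G_K` associated with a triangulation `K` of `Δ^d`. -/
def GallaiGraph (T : SimplexTriangulation d) : SimpleGraph T.GallaiVertex :=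
  SimpleGraph.fromRel (gallaiRel T)

end SimplexTriangulation

/-- Proposition 3.1: Gallai's graph `G_K` admits no proper `(d+1)`-colouring if
and only if every Sperner labelling of `K` has a rainbow facet. -/
theorem gallai_not_colorable_iff_sperner {d : ℕ} (T : SimplexTriangulation d) :
    ¬ (T.GallaiGraph).Colorable (d + 1) ↔
      ∀ l : EuclideanSpace ℝ (Fin d) → Fin (d + 1), T.IsSperner l →
        ∃ σ, T.IsFacet σ ∧ Rainbow l σ := by
  classical
  constructor
  · -- ¬Colorable → every Sperner labelling has a rainbow facet
    intro hnc l hl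
    by_contra hno
    push_neg at hno
    apply hnc
    -- for each facet there is a missing color
    have key : ∀ ρ : {σ // T.IsFacet σ}, ∃ j : Fin (d + 1), ∀ u ∈ ρ.1, l u ≠ j := by
      rintro ⟨ρ, hρ⟩
      have hnr : ¬ Rainbow l ρ := hno ρ hρ
      have h1 : (ρ.image l).card < d + 1 := by
        have hle : (ρ.image l).card ≤ ρ.card := Finset.card_image_le
        have hne : (ρ.image l).card ≠ ρ.card := fun h => hnr (Finset.card_image_iff.mp h)
        have hc2 := hρ.2
        omega
      have h2 : ρ.image l ≠ Finset.univ := by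
        intro h
        rw [h, Finset.card_univ, Fintype.card_fin] at h1
        omega
      obtain ⟨j, hj⟩ : ∃ j, j ∉ ρ.image l := by
        by_contra hc
        push_neg at hc
        exact h2 (Finset.eq_univ_iff_forall.mpr hc)
      exact ⟨j, fun u hu hlu => hj (Finset.mem_image.mpr ⟨u, hu, hlu⟩)⟩
    choose m hm using key
    set f : T.GallaiVertex → Fin (d + 1) := fun v =>
      match v with
      | Sum.inl u => l u
      | Sum.inr (Sum.inl ρ) => m ρ
      | Sum.inr (Sum.inr j) => j with hf
    have hsym : ∀ a b : T.GallaiVertex, a ≠ b → T.gallaiRel a b → f a ≠ f b := by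
      rintro (u | ρ | j) (u' | ρ' | j') hne h <;>
        simp only [SimplexTriangulation.gallaiRel] at h
      · exact hm ρ' _ h
      · -- u ∼ w_j'
        obtain ⟨i, his, hlu⟩ := hl.2 (u : EuclideanSpace ℝ (Fin d)) u.2 {i | i ≠ j'} h
        simpa [hf, hlu] using his
      · simpa [hf] using fun hjj => hne (by subst hjj; rfl)
    exact ⟨SimpleGraph.Coloring.mk f (by
      intro a b hab
      rw [SimplexTriangulation.GallaiGraph, SimpleGraph.fromRel_adj] at hab
      obtain ⟨hne, h | h⟩ := hab
      · exact hsym a b hne h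
      · exact (hsym b a hne.symm h).symm)⟩
  · -- contrapositive: Colorable → exists Sperner labelling with no rainbow facet
    intro hall hcol
    obtain ⟨c⟩ := hcol
    set g : Fin (d + 1) → Fin (d + 1) := fun j => c (Sum.inr (Sum.inr j)) with hg
    have hginj : Function.Injective g := by
      intro j j' hjj
      by_contra hne
      have hadj : (T.GallaiGraph).Adj (Sum.inr (Sum.inr j)) (Sum.inr (Sum.inr j')) := by
        refine (SimpleGraph.fromRel_adj T.gallaiRel _ _).mpr ?_
        exact ⟨fun h => hne (Sum.inr.inj (Sum.inr.inj h)), Or.inl trivial⟩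
      exact c.valid hadj hjj
    have hgbij : Function.Bijective g := (Finite.injective_iff_bijective).mp hginj
    set e : Fin (d + 1) ≃ Fin (d + 1) := Equiv.ofBijective g hgbij with he
    have hegj : ∀ j, e j = g j := fun j => rfl
    -- the key adjacency fact
    have keyA : ∀ (x : EuclideanSpace ℝ (Fin d)) (hx : x ∈ T.K.vertices)
        (s : Set (Fin (d + 1))), x ∈ convexHull ℝ (T.corner '' s) →
        e.symm (c (Sum.inl ⟨x, hx⟩)) ∈ s := by
      intro x hx s hmem
      by_contra hj
      set j := e.symm (c (Sum.inl ⟨x, hx⟩)) with hjdef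
      have hsub : s ⊆ {i | i ≠ j} := fun i hi hij => hj (hij ▸ hi)
      have hx2 : x ∈ convexHull ℝ (T.corner '' {i | i ≠ j}) :=
        convexHull_mono (Set.image_mono hsub) hmem
      have hadj : (T.GallaiGraph).Adj (Sum.inl ⟨x, hx⟩) (Sum.inr (Sum.inr j)) := by
        refine (SimpleGraph.fromRel_adj T.gallaiRel _ _).mpr ?_
        exact ⟨fun h => Sum.inl_ne_inr h, Or.inl hx2⟩
      apply c.valid hadj
      show c (Sum.inl ⟨x, hx⟩) = g j
      rw [← hegj, hjdef, Equiv.apply_symm_apply]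
    -- the labelling
    set l : EuclideanSpace ℝ (Fin d) → Fin (d + 1) := fun x =>
      if h : x ∈ T.K.vertices then e.symm (c (Sum.inl ⟨x, h⟩))
      else if h' : ∃ i, T.corner i = x then h'.choose else 0 with hl
    have hlv : ∀ x (hx : x ∈ T.K.vertices), l x = e.symm (c (Sum.inl ⟨x, hx⟩)) := by
      intro x hx; simp only [hl, dif_pos hx]
    have hSperner : T.IsSperner l := by
      constructor
      · intro i
        by_cases hx : T.corner i ∈ T.K.vertices
        · rw [hlv _ hx]
          have hmem : T.corner i ∈ convexHull ℝ (T.corner '' ({i} : Set (Fin (d + 1)))) :=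
            subset_convexHull _ _ ⟨i, rfl, rfl⟩
          have := keyA _ hx {i} hmem
          simpa using this
        · have hex : ∃ k, T.corner k = T.corner i := ⟨i, rfl⟩
          simp only [hl, dif_neg hx, dif_pos hex]
          exact T.indep.injective hex.choose_spec
      · intro x hx s hmem
        exact ⟨e.symm (c (Sum.inl ⟨x, hx⟩)), keyA x hx s hmem, hlv x hx⟩
    obtain ⟨σ, hσ, hr⟩ := hall l hSperner
    -- derive a contradiction: σ is a rainbow facet
    have hsubv : ∀ u ∈ σ, u ∈ T.K.vertices := by
      intro u hu
      exact T.K.down_closed hσ.1 (Finset.singleton_subset_iff.mpr hu)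
        (Finset.singleton_nonempty u)
    have himg : σ.image l = Finset.univ := by
      apply Finset.eq_univ_of_card
      rw [Finset.card_image_iff.mpr hr, hσ.2, Fintype.card_fin]
    set t := e.symm (c (Sum.inr (Sum.inl ⟨σ, hσ⟩))) with ht
    have : t ∈ σ.image l := himg ▸ Finset.mem_univ t
    obtain ⟨u, hu, hlu⟩ := Finset.mem_image.mp this
    have hadj : (T.GallaiGraph).Adj (Sum.inl ⟨u, hsubv u hu⟩) (Sum.inr (Sum.inl ⟨σ, hσ⟩)) := by
      refine (SimpleGraph.fromRel_adj T.gallaiRel _ _).mpr ?_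
      exact ⟨fun h => Sum.inl_ne_inr h, Or.inl hu⟩
    apply c.valid hadj
    have h1 : l u = e.symm (c (Sum.inl ⟨u, hsubv u hu⟩)) := hlv u (hsubv u hu)
    have h2 : e (l u) = c (Sum.inl ⟨u, hsubv u hu⟩) := by rw [h1, Equiv.apply_symm_apply]
    rw [← h2, hlu, ht, Equiv.apply_symm_apply]
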